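/- The SFTR-1/2 weights satisfy ω_0 > 0 and ω_m < 0 for every integer m ≥ 1. -/
import Mathlib


/-- The SFTR-1/2 weights `ω_m`. -/
noncomputable def sftrW (α : ℝ) : ℕ → ℝ
  | 0 => (2 * α / (α + 1)) ^ α
  | 1 => -α * (2 * α / (α + 1)) ^ (α + 1)
  | (m + 2) =>
      2 * α / (((m : ℝ) + 2) * (α + 1)) *
        (((((m : ℝ) + 2) - 1) / α - α) * sftrW α (m + 1) +
          (α - 1) / (2 * α) * (((m : ℝ) + 2) - 2) * sftrW α m)

theorem sftrW_sign (α : ℝ) (hα : α ∈ Set.Ioo (0 : ℝ) 1) :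
    0 < sftrW α 0 ∧ ∀ m : ℕ, 1 ≤ m → sftrW α m < 0 := by
  obtain ⟨hα0, hα1⟩ := hα
  have hbase : 0 < 2 * α / (α + 1) := by positivity
  have h0 : 0 < sftrW α 0 := by
    simp only [sftrW]
    exact Real.rpow_pos_of_pos hbase α
  have h1 : sftrW α 1 < 0 := by
    simp only [sftrW]
    have := Real.rpow_pos_of_pos hbase (α + 1)
    nlinarith
  -- strengthened induction
  have key : ∀ m : ℕ, sftrW α (m + 1) < 0 ∧ sftrW α (m + 1) ≤ (1 - α) * sftrW α m := by
    intro m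
    induction m with
    | zero =>
      refine ⟨h1, ?_⟩
      have : 0 < (1 - α) * sftrW α 0 := mul_pos (by linarith) h0
      linarith
    | succ m ih =>
      obtain ⟨hneg, hle⟩ := ih
      set x : ℝ := (m : ℝ) with hx
      have hx0 : 0 ≤ x := Nat.cast_nonneg m
      have hdpos : 0 < (x + 2) * (α + 1) := by
        have : (0:ℝ) < x + 2 := by linarith
        nlinarith
      have hrec : sftrW α (m + 2) =
          (2 * (x + 1 - α ^ 2) * sftrW α (m + 1) + (α - 1) * x * sftrW α m) /
            ((x + 2) * (α + 1)) := by
        show 2 * α / ((x + 2) * (α + 1)) *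
            (((x + 2 - 1) / α - α) * sftrW α (m + 1) +
              (α - 1) / (2 * α) * (x + 2 - 2) * sftrW α m) = _
        have hαne : α ≠ 0 := ne_of_gt hα0
        have hd : (x + 2) * (α + 1) ≠ 0 := ne_of_gt hdpos
        field_simp
        ring
      have hstep : sftrW α (m + 2) ≤ (1 - α) * sftrW α (m + 1) := by
        rw [hrec, div_le_iff₀ hdpos]
        nlinarith [mul_nonneg hx0 (le_of_lt (sub_pos.mpr hα1)),
          mul_le_mul_of_nonneg_left hle hx0,
          mul_nonneg (mul_nonneg (sq_nonneg α) hx0) (le_of_lt (neg_pos.mpr hneg))]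
      refine ⟨?_, hstep⟩
      have : (1 - α) * sftrW α (m + 1) < 0 :=
        mul_neg_of_pos_of_neg (by linarith) hneg
      linarith
  refine ⟨h0, ?_⟩
  intro m hm
  obtain ⟨k, rfl⟩ := Nat.exists_eq_add_of_le hm
  have := (key k).1
  simpa [Nat.add_comm] using this
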